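/- Let $n \ge 1$ and let $\mathcal{P}_{2n,a}$ denote the set of permutations $\pi$ of $\{1,\dots,2n\}$ such that $\pi$ maps $\{1,\dots,n\}$ into $\{n+1,\dots,2n\}$ and maps $\{n+1,\dots,2n\}$ into $\{1,\dots,n\}$. For a permutation $\pi$ let $c(\pi)$ denote the number of cycles of $\pi$. Then for every real number $\alpha$, $\sum_{\pi\in\mathcal{P}_{2n,a}} \alpha^{c(\pi)} = n!\,\alpha(\alpha+1)\cdots(\alpha+n-1)$. -/

import Mathlib

open Equiv Equiv.Perm Function Finset

variable {β γ : Type*} [Fintype β] [DecidableEq β] [Fintype γ] [DecidableEq γ]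

lemma const_on_pow (π : Perm β) {f : β → γ} (hf : f ∘ π = f) (k : ℕ) (x : β) :
    f ((π ^ k) x) = f x := by
  induction k generalizing x with
  | zero => simp
  | succ k ih =>
      rw [pow_succ, Perm.mul_apply, ih (π x)]
      exact congrFun hf x

/-- orbit labeling map -/
noncomputable def qmap (π : Perm β) (x : β) :
    ({c : Perm β // c ∈ π.cycleFactorsFinset} ⊕ {x : β // π x = x}) :=
  if h : π x = x then Sum.inr ⟨x, h⟩ else
    Sum.inl ⟨π.cycleOf x, Equiv.Perm.cycleOf_mem_cycleFactorsFinset_iff.2 (mem_support.2 h)⟩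

lemma qmap_apply_self (π : Perm β) (x : β) : qmap π (π x) = qmap π x := by
  unfold qmap
  by_cases hx : π x = x
  · rw [dif_pos (by simp [hx]), dif_pos hx]
    simp [hx]
  · rw [dif_neg (fun hc => hx (π.apply_eq_iff_eq.mp hc)), dif_neg hx]
    simp [π.cycleOf_self_apply]

lemma qmap_surj (π : Perm β) : Function.Surjective (qmap π) := by
  rintro (⟨c, hc⟩ | ⟨x, hx⟩)
  · obtain ⟨x, hx⟩ := (Equiv.Perm.mem_cycleFactorsFinset_iff.mp hc).1.nonempty_support
    have hπx : π x ≠ x := by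
      have := (Equiv.Perm.mem_cycleFactorsFinset_iff.mp hc).2 x hx
      rw [← this]; exact mem_support.mp hx
    refine ⟨x, ?_⟩
    rw [qmap, dif_neg hπx]
    congr 1
    exact Subtype.ext (Equiv.Perm.cycle_is_cycleOf hx hc).symm
  · exact ⟨x, by rw [qmap, dif_pos hx]⟩

lemma qmap_fiber (π : Perm β) {f : β → γ} (hf : f ∘ π = f) {x y : β}
    (h : qmap π x = qmap π y) : f x = f y := by
  unfold qmap at h
  by_cases hx : π x = x <;> by_cases hy : π y = y
  · rw [dif_pos hx, dif_pos hy] at h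
    have : x = y := by simpa using h
    rw [this]
  · rw [dif_pos hx, dif_neg hy] at h
    exact absurd h (by simp)
  · rw [dif_neg hx, dif_pos hy] at h
    exact absurd h (by simp)
  · rw [dif_neg hx, dif_neg hy] at h
    have hcyc : π.cycleOf x = π.cycleOf y := by simpa using h
    have hsc : π.SameCycle x y := by
      have : y ∈ (π.cycleOf x).support := by
        rw [hcyc]
        exact Equiv.Perm.mem_support_cycleOf_iff.2 ⟨Equiv.Perm.SameCycle.refl _ _, mem_support.2 hy⟩
      exact (Equiv.Perm.mem_support_cycleOf_iff' hx).mp this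
    obtain ⟨i, -, -, hi⟩ := hsc.exists_pow_eq π
    rw [← hi, const_on_pow π hf]

lemma colorCard (π : Perm β) :
    Fintype.card {f : β → γ // f ∘ π = f} =
      Fintype.card γ ^ (Multiset.card π.cycleType + Fintype.card {x : β // π x = x}) := by
  classical
  have key : Function.Bijective
      (fun (h : ({c : Perm β // c ∈ π.cycleFactorsFinset} ⊕ {x : β // π x = x}) → γ) =>
        (⟨h ∘ qmap π, by
          funext x
          exact congrArg h (qmap_apply_self π x)⟩ :
          {f : β → γ // f ∘ π = f})) := by
    constructor
    · intro h1 h2 he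
      have : h1 ∘ qmap π = h2 ∘ qmap π := congrArg Subtype.val he
      funext l
      obtain ⟨x, rfl⟩ := qmap_surj π l
      exact congrFun this x
    · rintro ⟨f, hf⟩
      refine ⟨f ∘ Function.surjInv (qmap_surj π), Subtype.ext ?_⟩
      funext x
      simp only [Function.comp_apply]
      exact qmap_fiber π hf (Function.surjInv_eq (qmap_surj π) (qmap π x))
  have hcard := (Fintype.card_of_bijective key).symm
  rw [hcard, Fintype.card_fun, Fintype.card_sum, Fintype.card_coe]
  congr 2
  rw [Equiv.Perm.cycleType_def, Multiset.card_map]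
  rfl




def e2 (n : ℕ) : Fin (2*n) ≃ (Fin n ⊕ Fin n) := (finCongr (two_mul n)).trans finSumFinEquiv.symm

lemma e2_apply_low {n : ℕ} (i : Fin (2*n)) (h : i.val < n) : e2 n i = Sum.inl ⟨i.val, h⟩ := by
  have h1 : finCongr (two_mul n) i = Fin.castAdd n ⟨i.val, h⟩ := by
    apply Fin.ext; simp
  simp only [e2, Equiv.trans_apply, h1, finSumFinEquiv_symm_apply_castAdd]

lemma e2_apply_high {n : ℕ} (i : Fin (2*n)) (h : n ≤ i.val) :
    e2 n i = Sum.inr ⟨i.val - n, by have := i.2; omega⟩ := by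
  have h1 : finCongr (two_mul n) i = Fin.natAdd n ⟨i.val - n, by have := i.2; omega⟩ := by
    apply Fin.ext; simp; omega
  simp only [e2, Equiv.trans_apply, h1, finSumFinEquiv_symm_apply_natAdd]

lemma e2_symm_inl {n : ℕ} (x : Fin n) : ((e2 n).symm (Sum.inl x)).val = x.val := by simp [e2]

lemma e2_symm_inr {n : ℕ} (x : Fin n) : ((e2 n).symm (Sum.inr x)).val = n + x.val := by simp [e2]; omega

def Phi {n : ℕ} (σ τ : Equiv.Perm (Fin n)) : Equiv.Perm (Fin n ⊕ Fin n) :=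
  (Equiv.sumComm _ _).trans (Equiv.sumCongr τ σ)

@[simp] lemma Phi_inl {n : ℕ} (σ τ : Equiv.Perm (Fin n)) (x : Fin n) :
    Phi σ τ (Sum.inl x) = Sum.inr (σ x) := rfl

@[simp] lemma Phi_inr {n : ℕ} (σ τ : Equiv.Perm (Fin n)) (x : Fin n) :
    Phi σ τ (Sum.inr x) = Sum.inl (τ x) := rfl

def Psi {n : ℕ} (σ τ : Equiv.Perm (Fin n)) : Equiv.Perm (Fin (2*n)) :=
  ((e2 n).trans ((Phi σ τ).trans (e2 n).symm))

lemma Psi_apply_low {n : ℕ} (σ τ : Equiv.Perm (Fin n)) (i : Fin (2*n)) (h : i.val < n) :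
    (Psi σ τ i).val = n + (σ ⟨i.val, h⟩).val := by
  simp [Psi, e2_apply_low i h, e2_symm_inr]

lemma Psi_apply_high {n : ℕ} (σ τ : Equiv.Perm (Fin n)) (i : Fin (2*n)) (h : n ≤ i.val) :
    (Psi σ τ i).val = (τ ⟨i.val - n, by have := i.2; omega⟩).val := by
  simp [Psi, e2_apply_high i h, e2_symm_inl]

def colorConj {β β' γ : Type*} (E : β ≃ β') (π : Equiv.Perm β) :
    {f : β → γ // f ∘ π = f} ≃
      {f' : β' → γ // f' ∘ (E.symm.trans (π.trans E)) = f'} where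
  toFun f := ⟨f.1 ∘ E.symm, by
    funext y
    show f.1 (E.symm (E (π (E.symm y)))) = f.1 (E.symm y)
    rw [Equiv.symm_apply_apply]
    exact congrFun f.2 _⟩
  invFun g := ⟨g.1 ∘ E, by
    funext x
    show g.1 (E (π x)) = g.1 (E x)
    have := congrFun g.2 (E x)
    simpa using this⟩
  left_inv f := Subtype.ext (by funext x; simp)
  right_inv g := Subtype.ext (by funext y; simp)

def colorPhi {n : ℕ} {γ : Type*} (σ τ : Equiv.Perm (Fin n)) :
    {f : (Fin n ⊕ Fin n) → γ // f ∘ (Phi σ τ) = f} ≃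
      {g : Fin n → γ // g ∘ (τ * σ) = g} where
  toFun f := ⟨f.1 ∘ Sum.inl, by
    funext x
    show f.1 (Sum.inl ((τ * σ) x)) = f.1 (Sum.inl x)
    have h1 := congrFun f.2 (Sum.inl x)
    have h2 := congrFun f.2 (Sum.inr (σ x))
    simp only [Function.comp_apply, Phi_inl, Phi_inr] at h1 h2
    rw [Equiv.Perm.mul_apply]
    exact h2.trans h1⟩
  invFun g := ⟨Sum.elim g.1 (g.1 ∘ ⇑σ⁻¹), by
    funext z
    cases z with
    | inl x =>
        show g.1 (σ⁻¹ (σ x)) = g.1 x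
        rw [Equiv.Perm.coe_inv, Equiv.symm_apply_apply]
    | inr y =>
        show g.1 (τ y) = g.1 (σ⁻¹ y)
        have := congrFun g.2 (σ⁻¹ y)
        simp only [Function.comp_apply, Equiv.Perm.mul_apply, Equiv.Perm.coe_inv, Equiv.apply_symm_apply] at this
        exact this⟩
  left_inv f := Subtype.ext (by
    funext z
    cases z with
    | inl x => rfl
    | inr y =>
        show f.1 (Sum.inl (σ⁻¹ y)) = f.1 (Sum.inr y)
        have := congrFun f.2 (Sum.inl (σ⁻¹ y))
        simp only [Function.comp_apply, Phi_inl, Equiv.Perm.coe_inv, Equiv.apply_symm_apply] at this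
        exact this.symm)
  right_inv g := Subtype.ext rfl

lemma fixPsi {n : ℕ} (σ τ : Equiv.Perm (Fin n)) :
    Fintype.card {x : Fin (2*n) // Psi σ τ x = x} = 0 := by
  rw [Fintype.card_eq_zero_iff]
  constructor
  rintro ⟨x, hx⟩
  have hv := congrArg Fin.val hx
  by_cases h : x.val < n
  · rw [Psi_apply_low σ τ x h] at hv; omega
  · rw [Psi_apply_high σ τ x (by omega)] at hv
    have := (τ ⟨x.val - n, by have := x.2; omega⟩).2
    omega

lemma ct_Psi {n : ℕ} (σ τ : Equiv.Perm (Fin n)) :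
    Multiset.card (Psi σ τ).cycleType =
      Multiset.card (τ * σ).cycleType + Fintype.card {x : Fin n // (τ * σ) x = x} := by
  have h1 := colorCard (γ := Fin 2) (Psi σ τ)
  have h2 := colorCard (γ := Fin 2) (τ * σ)
  have e : {f : Fin (2*n) → Fin 2 // f ∘ (Psi σ τ) = f} ≃
      {g : Fin n → Fin 2 // g ∘ (τ * σ) = g} := by
    have e1 := (colorConj (γ := Fin 2) (e2 n).symm (Phi σ τ))
    rw [Equiv.symm_symm] at e1
    exact e1.symm.trans (colorPhi σ τ)
  have hc := Fintype.card_congr e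
  rw [h1, h2, fixPsi, add_zero, Fintype.card_fin] at hc
  exact Nat.pow_right_injective (le_refl 2) hc

noncomputable def sigmaOf {n : ℕ} (π : Equiv.Perm (Fin (2*n)))
    (hπ : ∀ i : Fin (2*n), (i.val < n → n ≤ (π i).val) ∧ (n ≤ i.val → (π i).val < n)) :
    Equiv.Perm (Fin n) :=
  Equiv.ofBijective (fun x => (⟨(π ⟨x.val, by have := x.2; omega⟩).val - n, by
      have h1 := (hπ ⟨x.val, by have := x.2; omega⟩).1 x.2
      have h2 := (π ⟨x.val, by have := x.2; omega⟩).2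
      omega⟩ : Fin n))
    (Finite.injective_iff_bijective.mp (by
      intro x y hxy
      have hv := congrArg Fin.val hxy
      simp only at hv
      have hx := (hπ ⟨x.val, by have := x.2; omega⟩).1 x.2
      have hy := (hπ ⟨y.val, by have := y.2; omega⟩).1 y.2
      have heq : π ⟨x.val, by have := x.2; omega⟩ = π ⟨y.val, by have := y.2; omega⟩ :=
        Fin.ext (by omega)
      have := congrArg Fin.val (π.injective heq)
      exact Fin.ext this))

noncomputable def tauOf {n : ℕ} (π : Equiv.Perm (Fin (2*n)))
    (hπ : ∀ i : Fin (2*n), (i.val < n → n ≤ (π i).val) ∧ (n ≤ i.val → (π i).val < n)) :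
    Equiv.Perm (Fin n) :=
  Equiv.ofBijective (fun y => (⟨(π ⟨n + y.val, by have := y.2; omega⟩).val,
      (hπ ⟨n + y.val, by have := y.2; omega⟩).2 (by simp)⟩ : Fin n))
    (Finite.injective_iff_bijective.mp (by
      intro x y hxy
      have hv := congrArg Fin.val hxy
      simp only at hv
      have heq : π ⟨n + x.val, by have := x.2; omega⟩ = π ⟨n + y.val, by have := y.2; omega⟩ :=
        Fin.ext (by omega)
      have := congrArg Fin.val (π.injective heq)
      simp only at this
      exact Fin.ext (by omega)))

lemma Psi_of {n : ℕ} (π : Equiv.Perm (Fin (2*n)))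
    (hπ : ∀ i : Fin (2*n), (i.val < n → n ≤ (π i).val) ∧ (n ≤ i.val → (π i).val < n)) :
    Psi (sigmaOf π hπ) (tauOf π hπ) = π := by
  apply Equiv.ext
  intro i
  apply Fin.ext
  by_cases h : i.val < n
  · rw [Psi_apply_low _ _ i h]
    have h1 : (⟨i.val, by have := i.2; omega⟩ : Fin (2*n)) = i := Fin.ext rfl
    have h2 := (hπ i).1 h
    simp only [sigmaOf, Equiv.ofBijective_apply, h1]
    omega
  · rw [Psi_apply_high _ _ i (by omega)]
    have h1 : (⟨n + (i.val - n), by have := i.2; omega⟩ : Fin (2*n)) = i := Fin.ext (show n + (i.val - n) = i.val by omega)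
    simp only [tauOf, Equiv.ofBijective_apply, h1]

lemma Psi_symm_inl {n : ℕ} (σ τ : Equiv.Perm (Fin n)) (x : Fin n) :
    Psi σ τ ((e2 n).symm (Sum.inl x)) = (e2 n).symm (Sum.inr (σ x)) := by
  simp [Psi]

lemma Psi_symm_inr {n : ℕ} (σ τ : Equiv.Perm (Fin n)) (y : Fin n) :
    Psi σ τ ((e2 n).symm (Sum.inr y)) = (e2 n).symm (Sum.inl (τ y)) := by
  simp [Psi]

lemma sum_filter_eq {n : ℕ} (α : ℝ) :
    ∑ π ∈ Finset.univ.filter (fun π : Equiv.Perm (Fin (2 * n)) =>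
        ∀ i : Fin (2 * n), (i.val < n → n ≤ (π i).val) ∧ (n ≤ i.val → (π i).val < n)),
      α ^ (Multiset.card π.cycleType)
    = ∑ p : Equiv.Perm (Fin n) × Equiv.Perm (Fin n),
        α ^ (Multiset.card (Psi p.1 p.2).cycleType) := by
  symm
  apply Finset.sum_bij (fun p (_ : p ∈ Finset.univ) => Psi p.1 p.2)
  · rintro ⟨σ, τ⟩ -
    rw [Finset.mem_filter]
    refine ⟨Finset.mem_univ _, fun i => ⟨fun h => ?_, fun h => ?_⟩⟩
    · rw [Psi_apply_low σ τ i h]; omega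
    · rw [Psi_apply_high σ τ i h]; exact (τ _).2
  · rintro ⟨σ₁, τ₁⟩ - ⟨σ₂, τ₂⟩ - h
    have hσ : σ₁ = σ₂ := by
      apply Equiv.ext; intro x
      have := (Psi_symm_inl σ₁ τ₁ x).symm.trans
        ((DFunLike.congr_fun h ((e2 n).symm (Sum.inl x))).trans (Psi_symm_inl σ₂ τ₂ x))
      have := (e2 n).symm.injective this
      simpa using this
    have hτ : τ₁ = τ₂ := by
      apply Equiv.ext; intro y
      have := (Psi_symm_inr σ₁ τ₁ y).symm.trans
        ((DFunLike.congr_fun h ((e2 n).symm (Sum.inr y))).trans (Psi_symm_inr σ₂ τ₂ y))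
      have := (e2 n).symm.injective this
      simpa using this
    rw [Prod.mk.injEq]; exact ⟨hσ, hτ⟩
  · intro π hπ
    rw [Finset.mem_filter] at hπ
    exact ⟨(sigmaOf π hπ.2, tauOf π hπ.2), Finset.mem_univ _, Psi_of π hπ.2⟩
  · intros; rfl


noncomputable def permFiberEquiv {β γ : Type*} [Fintype β] [DecidableEq β] [DecidableEq γ]
    (g : β → γ) :
    {ρ : Equiv.Perm β // g ∘ ρ = g} ≃ (∀ c : γ, Equiv.Perm {x : β // g x = c}) where
  toFun ρ c := Equiv.Perm.subtypePerm ρ.1 (fun x => by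
    have : g (ρ.1 x) = g x := congrFun ρ.2 x
    rw [this])
  invFun u := ⟨(Equiv.sigmaFiberEquiv g).symm.trans
      ((Equiv.sigmaCongrRight u).trans (Equiv.sigmaFiberEquiv g)), by
    funext x
    exact (u (g x) ⟨x, rfl⟩).2⟩
  left_inv ρ := Subtype.ext (Equiv.ext fun x => rfl)
  right_inv u := by
    funext c
    apply Equiv.ext
    rintro ⟨x, hx⟩
    subst hx
    rfl

lemma card_permFiber {β γ : Type*} [Fintype β] [DecidableEq β] [Fintype γ] [DecidableEq γ]
    (g : β → γ) :
    Fintype.card {ρ : Equiv.Perm β // g ∘ ρ = g} =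
      ∏ c : γ, (Fintype.card {x : β // g x = c}).factorial := by
  rw [Fintype.card_congr (permFiberEquiv g), Fintype.card_pi]
  exact Finset.prod_congr rfl fun c _ => Fintype.card_perm

lemma sum_fibers {k m : ℕ} (g : Fin k → Fin m) :
    ∑ c : Fin m, Fintype.card {x : Fin k // g x = c} = k := by
  rw [← Fintype.card_sigma, Fintype.card_congr (Equiv.sigmaFiberEquiv g), Fintype.card_fin]

lemma fiber_cons {k m : ℕ} (g : Fin k → Fin m) (a c : Fin m) :
    Fintype.card {x : Fin (k+1) // (Fin.cons a g : Fin (k+1) → Fin m) x = c} =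
      (if a = c then 1 else 0) + Fintype.card {x : Fin k // g x = c} := by
  classical
  rw [Fintype.card_subtype, Fintype.card_subtype, Finset.card_filter, Finset.card_filter,
    Fin.sum_univ_succ]
  simp [Fin.cons_zero, Fin.cons_succ]

lemma Tval (k m : ℕ) :
    ∑ g : Fin k → Fin m, ∏ c : Fin m, (Fintype.card {x : Fin k // g x = c}).factorial
      = ∏ i ∈ Finset.range k, (m + i) := by
  classical
  induction k with
  | zero =>
      simp
  | succ k ih =>
      have key : ∀ (a : Fin m) (g : Fin k → Fin m),
          ∏ c : Fin m,
            (Fintype.card {x : Fin (k+1) // (Fin.cons a g : Fin (k+1) → Fin m) x = c}).factorial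
          = (∏ c : Fin m, (Fintype.card {x : Fin k // g x = c}).factorial)
              * (Fintype.card {x : Fin k // g x = a} + 1) := by
        intro a g
        rw [← Finset.prod_compl_mul_prod {a}, ← Finset.prod_compl_mul_prod {a}
          (f := fun c => (Fintype.card {x : Fin k // g x = c}).factorial)]
        rw [Finset.prod_singleton, Finset.prod_singleton]
        have h1 : ∀ c ∈ ({a} : Finset (Fin m))ᶜ,
            (Fintype.card {x : Fin (k+1) // (Fin.cons a g : Fin (k+1) → Fin m) x = c}).factorial
            = (Fintype.card {x : Fin k // g x = c}).factorial := by
          intro c hc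
          rw [fiber_cons, if_neg (fun h => (by simpa using hc : ¬ c = a) h.symm), zero_add]
        rw [Finset.prod_congr rfl h1, fiber_cons, if_pos rfl, Nat.add_comm 1, Nat.factorial_succ]
        ring
      rw [Finset.prod_range_succ, ← ih]
      rw [← Equiv.sum_comp (Fin.consEquiv (fun _ : Fin (k+1) => Fin m))
        (fun g => ∏ c : Fin m, (Fintype.card {x : Fin (k+1) // g x = c}).factorial)]
      rw [Fintype.sum_prod_type]
      calc ∑ a : Fin m, ∑ g : Fin k → Fin m, ∏ c : Fin m,
              (Fintype.card {x : Fin (k+1) //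
                ((Fin.consEquiv (fun _ : Fin (k+1) => Fin m)) (a, g) : Fin (k+1) → Fin m) x = c}).factorial
          = ∑ a : Fin m, ∑ g : Fin k → Fin m,
              (∏ c : Fin m, (Fintype.card {x : Fin k // g x = c}).factorial)
                * (Fintype.card {x : Fin k // g x = a} + 1) := by
            refine Finset.sum_congr rfl fun a _ => Finset.sum_congr rfl fun g _ => ?_
            exact key a g
        _ = ∑ g : Fin k → Fin m, ∑ a : Fin m,
              (∏ c : Fin m, (Fintype.card {x : Fin k // g x = c}).factorial)
                * (Fintype.card {x : Fin k // g x = a} + 1) := Finset.sum_comm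
        _ = ∑ g : Fin k → Fin m,
              (∏ c : Fin m, (Fintype.card {x : Fin k // g x = c}).factorial) * (m + k) := by
            refine Finset.sum_congr rfl fun g _ => ?_
            rw [← Finset.mul_sum]
            congr 1
            rw [Finset.sum_add_distrib, sum_fibers g]
            simp [Nat.add_comm]
        _ = (∑ g : Fin k → Fin m, ∏ c : Fin m,
              (Fintype.card {x : Fin k // g x = c}).factorial) * (m + k) :=
            (Finset.sum_mul ..).symm

lemma Bnat (k m : ℕ) :
    ∑ ρ : Equiv.Perm (Fin k),
        m ^ (Multiset.card ρ.cycleType + Fintype.card {x : Fin k // ρ x = x})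
      = ∏ i ∈ Finset.range k, (m + i) := by
  classical
  have h1 : ∀ ρ : Equiv.Perm (Fin k),
      m ^ (Multiset.card ρ.cycleType + Fintype.card {x : Fin k // ρ x = x})
        = Fintype.card {g : Fin k → Fin m // g ∘ ρ = g} := by
    intro ρ
    rw [colorCard (γ := Fin m) ρ, Fintype.card_fin]
  rw [Finset.sum_congr rfl (fun ρ _ => h1 ρ)]
  have h2 : ∑ ρ : Equiv.Perm (Fin k), Fintype.card {g : Fin k → Fin m // g ∘ ρ = g}
      = ∑ g : Fin k → Fin m, Fintype.card {ρ : Equiv.Perm (Fin k) // g ∘ ρ = g} := by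
    rw [← Fintype.card_sigma, ← Fintype.card_sigma]
    apply Fintype.card_congr
    exact {
      toFun := fun p => ⟨p.2.1, p.1, p.2.2⟩
      invFun := fun p => ⟨p.2.1, p.1, p.2.2⟩
      left_inv := fun p => rfl
      right_inv := fun p => rfl }
  rw [h2, ← Tval k m]
  exact Finset.sum_congr rfl fun g _ => card_permFiber g

lemma stepB (k : ℕ) (α : ℝ) :
    ∑ ρ : Equiv.Perm (Fin k),
        α ^ (Multiset.card ρ.cycleType + Fintype.card {x : Fin k // ρ x = x})
      = ∏ i ∈ Finset.range k, (α + i) := by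
  classical
  have hpq : (∑ ρ : Equiv.Perm (Fin k),
      (Polynomial.X : Polynomial ℝ) ^ (Multiset.card ρ.cycleType +
        Fintype.card {x : Fin k // ρ x = x}))
      = ∏ i ∈ Finset.range k, (Polynomial.X + Polynomial.C (i : ℝ)) := by
    apply Polynomial.eq_of_infinite_eval_eq
    apply Set.Infinite.mono (s := Set.range (fun m : ℕ => (m : ℝ)))
    · rintro _ ⟨m, rfl⟩
      simp only [Set.mem_setOf_eq, Polynomial.eval_finset_sum, Polynomial.eval_pow,
        Polynomial.eval_X, Polynomial.eval_prod, Polynomial.eval_add, Polynomial.eval_C]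
      have := Bnat k m
      calc ∑ ρ : Equiv.Perm (Fin k),
            ((m : ℝ)) ^ (Multiset.card ρ.cycleType + Fintype.card {x : Fin k // ρ x = x})
          = ((∑ ρ : Equiv.Perm (Fin k),
              m ^ (Multiset.card ρ.cycleType + Fintype.card {x : Fin k // ρ x = x}) : ℕ) : ℝ) := by
            push_cast; rfl
        _ = ((∏ i ∈ Finset.range k, (m + i) : ℕ) : ℝ) := by rw [this]
        _ = ∏ i ∈ Finset.range k, ((m : ℝ) + i) := by push_cast; rfl
    · apply Set.infinite_range_of_injective
      exact fun a b h => Nat.cast_injective h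
  have := congrArg (Polynomial.eval α) hpq
  simpa only [Polynomial.eval_finset_sum, Polynomial.eval_pow, Polynomial.eval_X,
    Polynomial.eval_prod, Polynomial.eval_add, Polynomial.eval_C] using this

theorem stmt0 (n : ℕ) (hn : 1 ≤ n) (α : ℝ) :
    ∑ π ∈ Finset.univ.filter (fun π : Equiv.Perm (Fin (2 * n)) =>
        ∀ i : Fin (2 * n), (i.val < n → n ≤ (π i).val) ∧ (n ≤ i.val → (π i).val < n)),
      α ^ π.cycleType.card
    = (n.factorial : ℝ) * ∏ i ∈ Finset.range n, (α + i) := by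
  classical
  rw [sum_filter_eq α]
  have h1 : ∀ p : Equiv.Perm (Fin n) × Equiv.Perm (Fin n),
      α ^ Multiset.card (Psi p.1 p.2).cycleType
        = α ^ (Multiset.card (p.2 * p.1).cycleType +
            Fintype.card {x : Fin n // (p.2 * p.1) x = x}) := by
    intro p
    rw [ct_Psi p.1 p.2]
  rw [Finset.sum_congr rfl (fun p _ => h1 p), Fintype.sum_prod_type]
  have h2 : ∀ σ : Equiv.Perm (Fin n),
      (∑ τ : Equiv.Perm (Fin n),
        α ^ (Multiset.card (τ * σ).cycleType + Fintype.card {x : Fin n // (τ * σ) x = x}))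
      = ∏ i ∈ Finset.range n, (α + i) := by
    intro σ
    rw [← stepB n α]
    exact Fintype.sum_equiv (Equiv.mulRight σ) _ _ (fun τ => rfl)
  rw [Finset.sum_congr rfl (fun σ _ => h2 σ), Finset.sum_const, Finset.card_univ,
    Fintype.card_perm, Fintype.card_fin, nsmul_eq_mul]
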